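/- Let \(\mathcal{A}=(Q,\Sigma,\delta)\) be a synchronizing deterministic finite automaton with \(n=|Q|\) states, and let \(u\in\Sigma^{*}\) be a word of length \(l\) and corank \(r\) with \(r\le n-2\). Then there is a word of length at most \(l+(r+1)(r+2)/2\) and corank at least \(r+1\). -/

import Mathlib

/-- The action of a word `w` on a state `q`: apply the transition function letter by letter. -/
def wordAct {Q A : Type*} (δ : Q → A → Q) (q : Q) (w : List A) : Q := w.foldl δ q

/-- The image of a set of states `S` under a word `w`. -/
def wordImage {Q A : Type*} [DecidableEq Q] (δ : Q → A → Q) (S : Finset Q) (w : List A) :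
    Finset Q :=
  S.image fun q => wordAct δ q w

/-- The rank of a word `w`: the cardinality of `Q ⋅ w`. -/
def wordRank {Q A : Type*} [Fintype Q] [DecidableEq Q] (δ : Q → A → Q) (w : List A) : ℕ :=
  (wordImage δ Finset.univ w).card

/-- An automaton is synchronizing if some word has rank one. -/
def IsSynchronizing {Q A : Type*} [Fintype Q] [DecidableEq Q] (δ : Q → A → Q) : Prop :=
  ∃ w : List A, wordRank δ w = 1

/-- The reset threshold: the length of the shortest rank-one word. -/
noncomputable def resetThreshold {Q A : Type*} [Fintype Q] [DecidableEq Q]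
    (δ : Q → A → Q) : ℕ :=
  sInf {l : ℕ | ∃ w : List A, w.length = l ∧ wordRank δ w = 1}



section PinFranklAux

open Finset Matrix

variable {ν : ℕ}

def ccons (x y : Fin (ν+2) → ℝ) (G : Fin ν → Fin (ν+2) → ℝ) : Fin (ν+2) → Fin (ν+2) → ℝ :=
  Fin.cons x (Fin.cons y G)

@[simp] lemma ccons_zero (x y : Fin (ν+2) → ℝ) (G) : ccons x y G 0 = x := rfl
@[simp] lemma ccons_one (x y : Fin (ν+2) → ℝ) (G) : ccons x y G 1 = y := rfl
@[simp] lemma ccons_ss (x y : Fin (ν+2) → ℝ) (G) (j : Fin ν) :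
    ccons x y G j.succ.succ = G j := by
  simp [ccons]

noncomputable def ee (k : Fin ν) : Fin ν → ℝ := Pi.single k 1

lemma vec_eq_sum (x : Fin ν → ℝ) : x = ∑ k, x k • ee k := by
  funext j
  simp [ee, Pi.single_apply, Finset.sum_ite_eq', mul_comm]

lemma cons_cons_update (x y x' y' : Fin (ν+2) → ℝ) (G : Fin ν → Fin (ν+2) → ℝ) :
    Function.update (Function.update (ccons x y G) 0 x') 1 y' = ccons x' y' G := by
  funext i
  refine Fin.cases ?_ (fun j => ?_) i
  · rw [Function.update_of_ne (Fin.zero_ne_one), Function.update_self, ccons_zero]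
  · refine Fin.cases ?_ (fun j' => ?_) j
    · rw [show (Fin.succ 0 : Fin (ν+2)) = 1 from rfl, Function.update_self, ccons_one]
    · rw [Function.update_of_ne, Function.update_of_ne, ccons_ss, ccons_ss]
      · exact Fin.succ_ne_zero _
      · intro h
        exact (Fin.succ_ne_zero j') (Fin.succ_injective _ h)

lemma det_cons_expand (x y : Fin (ν+2) → ℝ) (G : Fin ν → Fin (ν+2) → ℝ) :
    (Matrix.of (ccons x y G)).det
      = ∑ k, ∑ l, x k * y l * (Matrix.of (ccons (ee k) (ee l) G)).det := by
  let f := (Matrix.detRowAlternating :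
    AlternatingMap ℝ (Fin (ν+2) → ℝ) ℝ (Fin (ν+2))).toMultilinearMap
  have key : ∀ x y : Fin (ν+2) → ℝ, (Matrix.of (ccons x y G)).det = f (ccons x y G) :=
    fun _ _ => rfl
  have upd_expand : ∀ (m : Fin (ν+2) → Fin (ν+2) → ℝ) (i : Fin (ν+2)) (v : Fin (ν+2) → ℝ),
      f (Function.update m i v) = ∑ l, v l • f (Function.update m i (ee l)) := by
    intro m i v
    conv_lhs => rw [vec_eq_sum v]
    rw [MultilinearMap.map_update_sum]
    exact Finset.sum_congr rfl fun l _ => f.map_update_smul ..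
  have expand1 : ∀ x y : Fin (ν+2) → ℝ,
      f (ccons x y G) = ∑ l, y l • f (ccons x (ee l) G) := by
    intro x y
    conv_lhs => rw [← cons_cons_update x y x y G]
    rw [upd_expand]
    exact Finset.sum_congr rfl fun l _ => by rw [cons_cons_update]
  have expand0 : ∀ x y : Fin (ν+2) → ℝ,
      f (ccons x y G) = ∑ k, x k • f (ccons (ee k) y G) := by
    intro x y
    conv_lhs => rw [← cons_cons_update x y x y G, Function.update_comm (Fin.zero_ne_one)]
    rw [upd_expand]
    refine Finset.sum_congr rfl fun k _ => ?_
    rw [← Function.update_comm (Fin.zero_ne_one), cons_cons_update]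
  calc (Matrix.of (ccons x y G)).det = ∑ l, y l • f (ccons x (ee l) G) := by
        rw [key, expand1]
    _ = ∑ l, ∑ k, y l • (x k • f (ccons (ee k) (ee l) G)) := by
        refine Finset.sum_congr rfl fun l _ => ?_
        rw [expand0, Finset.smul_sum]
    _ = ∑ k, ∑ l, x k * y l * (Matrix.of (ccons (ee k) (ee l) G)).det := by
        rw [Finset.sum_comm]
        refine Finset.sum_congr rfl fun k _ => Finset.sum_congr rfl fun l _ => ?_
        rw [key]
        simp only [smul_eq_mul]
        ring

lemma det_ccons_diag (x : Fin (ν+2) → ℝ) (G : Fin ν → Fin (ν+2) → ℝ) :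
    (Matrix.of (ccons x x G)).det = 0 := by
  refine Matrix.det_zero_of_row_eq (Fin.zero_ne_one) ?_
  show ccons x x G 0 = ccons x x G 1
  simp

lemma det_ccons_swap (x y : Fin (ν+2) → ℝ) (G : Fin ν → Fin (ν+2) → ℝ) :
    (Matrix.of (ccons y x G)).det = -(Matrix.of (ccons x y G)).det := by
  have hswap : (Matrix.of (ccons y x G))
      = (Matrix.of (ccons x y G)).submatrix (Equiv.swap 0 1) id := by
    ext i j
    have hrow : ∀ i, ccons y x G i = ccons x y G (Equiv.swap 0 1 i) := by
      intro i
      refine Fin.cases ?_ (fun j' => Fin.cases ?_ (fun j'' => ?_) j') i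
      · rw [Equiv.swap_apply_left]; simp
      · rw [show (Fin.succ 0 : Fin (ν+2)) = 1 from rfl, Equiv.swap_apply_right]; simp
      · have h1 : (Equiv.swap (0:Fin (ν+2)) 1) j''.succ.succ = j''.succ.succ :=
          Equiv.swap_apply_of_ne_of_ne (Fin.succ_ne_zero _)
            (fun h => (Fin.succ_ne_zero j'')
              (Fin.succ_injective _ ((show ((1:Fin (ν+2))) = Fin.succ 0 from rfl) ▸ h)))
        rw [h1]
        simp
    simp only [Matrix.submatrix_apply, Matrix.of_apply, id_eq, hrow]
  rw [hswap, Matrix.det_permute, Equiv.Perm.sign_swap (Fin.zero_ne_one)]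
  simp

lemma sum_pairs {N : ℕ} (x y : Fin N → ℝ) (D : Fin N → Fin N → ℝ)
    (hd : ∀ k, D k k = 0) (ha : ∀ k l, D l k = -D k l) :
    ∑ k, ∑ l, x k * y l * D k l
      = ∑ p ∈ Finset.univ.filter (fun p : Fin N × Fin N => p.1 < p.2),
          (x p.1 * y p.2 - x p.2 * y p.1) * D p.1 p.2 := by
  rw [← Finset.sum_product']
  rw [← Finset.sum_filter_add_sum_filter_not (Finset.univ ×ˢ Finset.univ)
    (fun p : Fin N × Fin N => p.1 < p.2)]
  have hsplit : ∀ p : Fin N × Fin N, ¬ p.1 < p.2 ↔ (p.1 = p.2 ∨ p.2 < p.1) := by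
    intro p
    rw [Fin.lt_def, Fin.lt_def, Fin.ext_iff]
    omega
  have huniv : (Finset.univ ×ˢ Finset.univ : Finset (Fin N × Fin N)) = Finset.univ := by
    simp
  rw [huniv]
  have h2 : (Finset.univ.filter (fun p : Fin N × Fin N => ¬ p.1 < p.2))
      = Finset.univ.filter (fun p : Fin N × Fin N => p.1 = p.2)
        ∪ Finset.univ.filter (fun p : Fin N × Fin N => p.2 < p.1) := by
    rw [← Finset.filter_or]
    exact Finset.filter_congr fun p _ => by rw [hsplit]
  have hdisj : Disjoint (Finset.univ.filter (fun p : Fin N × Fin N => p.1 = p.2))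
      (Finset.univ.filter (fun p : Fin N × Fin N => p.2 < p.1)) := by
    rw [Finset.disjoint_left]
    intro p hp hq
    simp only [Finset.mem_filter] at hp hq
    rw [hp.2] at hq
    exact absurd hq.2 (lt_irrefl _)
  rw [h2, Finset.sum_union hdisj]
  have hdiagsum : ∑ p ∈ Finset.univ.filter (fun p : Fin N × Fin N => p.1 = p.2),
      x p.1 * y p.2 * D p.1 p.2 = 0 := by
    refine Finset.sum_eq_zero fun p hp => ?_
    simp only [Finset.mem_filter] at hp
    rw [hp.2, hd]
    ring
  have hgtsum : ∑ p ∈ Finset.univ.filter (fun p : Fin N × Fin N => p.2 < p.1),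
      x p.1 * y p.2 * D p.1 p.2
      = ∑ p ∈ Finset.univ.filter (fun p : Fin N × Fin N => p.1 < p.2),
        -(x p.2 * y p.1 * D p.1 p.2) := by
    refine Finset.sum_nbij' (fun p => Prod.swap p) (fun p => Prod.swap p) ?_ ?_ ?_ ?_ ?_
    · intro p hp
      simp only [Finset.mem_filter] at hp ⊢
      exact ⟨Finset.mem_univ _, hp.2⟩
    · intro p hp
      simp only [Finset.mem_filter] at hp ⊢
      exact ⟨Finset.mem_univ _, hp.2⟩
    · intro p _; simp
    · intro p _; simp
    · intro p hp
      simp only [Prod.fst_swap, Prod.snd_swap]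
      rw [ha p.2 p.1]
      ring
  rw [hdiagsum, hgtsum, zero_add, ← Finset.sum_add_distrib]
  refine Finset.sum_congr rfl fun p hp => ?_
  ring

lemma card_lt_pairs (N : ℕ) :
    2 * (Finset.univ.filter (fun p : Fin N × Fin N => p.1 < p.2)).card + N = N * N := by
  classical
  set A := Finset.univ.filter (fun p : Fin N × Fin N => p.1 < p.2) with hA
  set B := Finset.univ.filter (fun p : Fin N × Fin N => p.1 = p.2) with hB
  set C := Finset.univ.filter (fun p : Fin N × Fin N => p.2 < p.1) with hC
  have hCA : C.card = A.card := by
    refine Finset.card_nbij' (fun p => Prod.swap p) (fun p => Prod.swap p) ?_ ?_ ?_ ?_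
    · intro p hp; simp only [hA, hC, Finset.mem_filter] at hp ⊢
      exact Finset.mem_filter.mpr ⟨Finset.mem_univ _, (Finset.mem_filter.mp hp).2⟩
    · intro p hp; simp only [hA, hC, Finset.mem_filter] at hp ⊢
      exact Finset.mem_filter.mpr ⟨Finset.mem_univ _, (Finset.mem_filter.mp hp).2⟩
    · intro p _; simp
    · intro p _; simp
  have hBcard : B.card = N := by
    rw [hB]
    rw [show (Finset.univ.filter (fun p : Fin N × Fin N => p.1 = p.2))
      = Finset.univ.image (fun k : Fin N => (k, k)) from ?_]
    · rw [Finset.card_image_of_injective _ (fun a b h => (Prod.mk.injEq _ _ _ _ ▸ h).1)]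
      simp
    · ext p
      simp only [Finset.mem_filter, Finset.mem_image, Finset.mem_univ, true_and]
      constructor
      · intro h; exact ⟨p.1, Prod.ext rfl h⟩
      · rintro ⟨k, rfl⟩; rfl
  have hsplit : A.card + (B.card + C.card) = N * N := by
    have h1 : A.card + (Finset.univ.filter (fun p : Fin N × Fin N => ¬ p.1 < p.2)).card
        = N * N := by
      rw [hA, Finset.card_filter_add_card_filter_not]
      simp
    have h2 : (Finset.univ.filter (fun p : Fin N × Fin N => ¬ p.1 < p.2)).card
        = B.card + C.card := by
      have hun : Finset.univ.filter (fun p : Fin N × Fin N => ¬ p.1 < p.2) = B ∪ C := by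
        rw [hB, hC, ← Finset.filter_or]
        refine Finset.filter_congr fun p _ => ?_
        rw [Fin.lt_def, Fin.lt_def, Fin.ext_iff]
        omega
      rw [hun, Finset.card_union_of_disjoint]
      rw [Finset.disjoint_left]
      intro p hp hq
      simp only [hB, hC, Finset.mem_filter] at hp hq
      rw [hp.2] at hq
      exact absurd hq.2 (lt_irrefl _)
    rw [h2] at h1
    omega
  omega


set_option maxHeartbeats 1000000 in
lemma frankl_pairs {Q : Type*} [Fintype Q] [DecidableEq Q] (m r : ℕ)
    (p q : Fin m → Q) (B : Fin m → Finset Q)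
    (hB : ∀ i, (B i).card = r)
    (hp : ∀ i, p i ∉ B i) (hq : ∀ i, q i ∉ B i) (hpq : ∀ i, p i ≠ q i)
    (hcross : ∀ i j : Fin m, i < j → p j ∈ B i ∨ q j ∈ B i) :
    m ≤ (r + 1) * (r + 2) / 2 := by
  classical
  -- an injection of `Q` into `ℝ`
  set t : Q → ℝ := fun a => ((Fintype.equivFin Q a : ℕ) : ℝ) with ht
  have htinj : Function.Injective t := by
    intro a b h
    exact (Fintype.equivFin Q).injective (Fin.ext (Nat.cast_injective h))
  -- enumeration of each `B i`
  have hbex : ∀ i, ∃ b : Fin r → Q, Function.Injective b ∧ (∀ k, b k ∈ B i)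
      ∧ ∀ x ∈ B i, ∃ k, b k = x := by
    intro i
    obtain ⟨e⟩ : Nonempty (B i ≃ Fin r) := ⟨(B i).equivFinOfCardEq (hB i)⟩
    refine ⟨fun k => (e.symm k : Q), fun a b h => e.symm.injective (Subtype.ext h),
      fun k => (e.symm k).2, fun x hx => ⟨e ⟨x, hx⟩, by simp⟩⟩
  choose b hbinj hbmem hbsurj using hbex
  -- the rows
  set R : Q → Fin (r+2) → ℝ := fun a j => t a ^ (j : ℕ) with hR
  set Grow : Fin m → Fin r → Fin (r+2) → ℝ := fun i s => R (b i s) with hGrow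
  -- the matrices
  set P := {pr : Fin (r+2) × Fin (r+2) // pr.1 < pr.2}
  set F : Matrix (Fin m) P ℝ :=
    fun i pr => (Matrix.of (ccons (ee pr.1.1) (ee pr.1.2) (Grow i))).det with hF
  set Cm : Matrix P (Fin m) ℝ :=
    fun pr i => R (p i) pr.1.1 * R (q i) pr.1.2 - R (p i) pr.1.2 * R (q i) pr.1.1 with hCm
  -- each entry of `F * Cm` is a Vandermonde determinant
  have hvdm : ∀ j i : Fin m,
      Matrix.vandermonde (Fin.cons (t (p i)) (Fin.cons (t (q i)) (fun s => t (b j s))))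
        = Matrix.of (ccons (R (p i)) (R (q i)) (Grow j)) := by
    intro j i
    ext a c
    rw [Matrix.vandermonde_apply, Matrix.of_apply]
    refine Fin.cases ?_ (fun a' => Fin.cases ?_ (fun a'' => ?_) a') a <;> simp [hR, hGrow]
  have hM : ∀ j i : Fin m, (F * Cm) j i
      = (Matrix.vandermonde
          (Fin.cons (t (p i)) (Fin.cons (t (q i)) (fun s => t (b j s))))).det := by
    intro j i
    rw [hvdm, Matrix.mul_apply]
    rw [show (Matrix.of (ccons (R (p i)) (R (q i)) (Grow j))).det
      = ∑ k, ∑ l, R (p i) k * R (q i) l *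
          (Matrix.of (ccons (ee k) (ee l) (Grow j))).det from det_cons_expand _ _ _]
    rw [sum_pairs _ _ _ (fun k => det_ccons_diag _ _) (fun k l => det_ccons_swap _ _ _)]
    rw [Finset.sum_subtype (p := fun pr : Fin (r+2) × Fin (r+2) => pr.1 < pr.2) _
      (fun pr => by simp)]
    refine Finset.sum_congr rfl fun pr _ => ?_
    simp only [hF, hCm]
    ring
  -- diagonal entries are nonzero
  have hdiag : ∀ i : Fin m, (F * Cm) i i ≠ 0 := by
    intro i
    rw [hM, Ne, Matrix.det_vandermonde_eq_zero_iff]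
    rintro ⟨a, c, hac, hne⟩
    -- the parameter vector is injective
    have hvinj : Function.Injective
        (Fin.cons (t (p i)) (Fin.cons (t (q i)) (fun s => t (b i s)))
          : Fin (r+2) → ℝ) := by
      rw [Fin.cons_injective_iff]
      refine ⟨?_, ?_⟩
      · rw [Fin.range_cons]
        rintro (h | ⟨s, hs⟩)
        · exact hpq i (htinj h)
        · exact hp i (htinj hs.symm ▸ hbmem i s)
      · rw [Fin.cons_injective_iff]
        refine ⟨?_, fun a b h => hbinj i (htinj h)⟩
        rintro ⟨s, hs⟩
        exact hq i (htinj hs.symm ▸ hbmem i s)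
    exact hne (hvinj hac)
  -- entries above the diagonal vanish
  have hzero : ∀ j i : Fin m, j < i → (F * Cm) j i = 0 := by
    intro j i hji
    rw [hM, Matrix.det_vandermonde_eq_zero_iff]
    rcases hcross j i hji with h | h
    · obtain ⟨s, hs⟩ := hbsurj j _ h
      refine ⟨0, s.succ.succ, ?_, (Fin.succ_ne_zero _).symm⟩
      simp [hs]
    · obtain ⟨s, hs⟩ := hbsurj j _ h
      refine ⟨1, s.succ.succ, ?_, ?_⟩
      · rw [show ((1 : Fin (r+2))) = Fin.succ 0 from rfl]
        simp [hs]
      · rw [show ((1 : Fin (r+2))) = Fin.succ 0 from rfl]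
        intro hcon
        exact (Fin.succ_ne_zero s) (Fin.succ_injective _ hcon.symm)
  -- determinant is nonzero, hence full rank
  have hltri : (F * Cm).BlockTriangular OrderDual.toDual := by
    intro a c hac
    exact hzero a c hac
  have hdet : (F * Cm).det ≠ 0 := by
    rw [Matrix.det_of_lowerTriangular _ hltri]
    exact Finset.prod_ne_zero_iff.mpr fun i _ => hdiag i
  have hunit : IsUnit (F * Cm) :=
    (Matrix.isUnit_iff_isUnit_det _).mpr (isUnit_iff_ne_zero.mpr hdet)
  have hrank : (F * Cm).rank = m := by
    rw [Matrix.rank_of_isUnit _ hunit, Fintype.card_fin]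
  have hle : m ≤ (Finset.univ.filter
      fun pr : Fin (r+2) × Fin (r+2) => pr.1 < pr.2).card := by
    calc m = (F * Cm).rank := hrank.symm
      _ ≤ F.rank := Matrix.rank_mul_le_left _ _
      _ ≤ Fintype.card P := Matrix.rank_le_card_width F
      _ = _ := Fintype.card_subtype _
  have hc := card_lt_pairs (r + 2)
  have harith : (r + 2) * (r + 2) = (r + 1) * (r + 2) + (r + 2) := by ring
  omega

lemma wordAct_append {Q A : Type*} (δ : Q → A → Q) (q : Q) (w₁ w₂ : List A) :
    wordAct δ q (w₁ ++ w₂) = wordAct δ (wordAct δ q w₁) w₂ := by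
  simp [wordAct, List.foldl_append]

lemma wordImage_append {Q A : Type*} [DecidableEq Q] (δ : Q → A → Q) (S : Finset Q)
    (w₁ w₂ : List A) :
    wordImage δ S (w₁ ++ w₂) = wordImage δ (wordImage δ S w₁) w₂ := by
  simp [wordImage, Finset.image_image, Function.comp_def, wordAct_append]

lemma wordImage_card_lt {Q A : Type*} [DecidableEq Q] (δ : Q → A → Q) (S : Finset Q)
    (w : List A) {p q : Q} (hp : p ∈ S) (hq : q ∈ S) (hne : p ≠ q)
    (heq : wordAct δ p w = wordAct δ q w) :
    (wordImage δ S w).card < S.card := by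
  refine lt_of_le_of_ne (Finset.card_image_le) fun hcard => ?_
  exact hne ((Finset.card_image_iff.mp hcard) hp hq heq)

lemma compress_short {Q A : Type*} [Fintype Q] [DecidableEq Q] (δ : Q → A → Q)
    (hsync : IsSynchronizing δ) (S : Finset Q) (r : ℕ)
    (hcard : S.card + r = Fintype.card Q) (h2 : 2 ≤ S.card) :
    ∃ w : List A, w.length ≤ (r + 1) * (r + 2) / 2 ∧ (wordImage δ S w).card < S.card := by
  classical
  set T : Set ℕ := {k | ∃ w : List A, w.length = k ∧ (wordImage δ S w).card < S.card} with hT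
  have hTne : T.Nonempty := by
    obtain ⟨w₀, hw₀⟩ := hsync
    refine ⟨w₀.length, w₀, rfl, ?_⟩
    have hsub : wordImage δ S w₀ ⊆ wordImage δ Finset.univ w₀ :=
      Finset.image_subset_image (Finset.subset_univ S)
    have h1 : (wordImage δ Finset.univ w₀).card = 1 := hw₀
    have := Finset.card_le_card hsub
    omega
  set m := sInf T with hm
  obtain ⟨w, hwlen, hwcomp⟩ := Nat.sInf_mem hTne
  -- prefixes of w do not compress S
  have hpre : ∀ i : ℕ, i < m → (wordImage δ S (w.take i)).card = S.card := by
    intro i hi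
    refine le_antisymm Finset.card_image_le (le_of_not_gt fun hlt => ?_)
    have hmem : i ∈ T := ⟨w.take i, by rw [List.length_take]; omega, hlt⟩
    exact absurd (Nat.sInf_le hmem) (by omega)
  -- each suffix compresses the corresponding prefix image
  have hsuffix : ∀ i : Fin m, ∃ p q : Q, p ∈ wordImage δ S (w.take i)
      ∧ q ∈ wordImage δ S (w.take i) ∧ p ≠ q
      ∧ wordAct δ p (w.drop i) = wordAct δ q (w.drop i) := by
    intro i
    have himg : wordImage δ (wordImage δ S (w.take i)) (w.drop i) = wordImage δ S w := by
      rw [← wordImage_append, List.take_append_drop]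
    have hlt : (wordImage δ (wordImage δ S (w.take i)) (w.drop i)).card
        < (wordImage δ S (w.take i)).card := by
      rw [himg, hpre i i.2]
      · exact hwcomp
    by_contra hcon
    push_neg at hcon
    have hinj : Set.InjOn (fun x => wordAct δ x (w.drop i))
        (wordImage δ S (w.take i) : Finset Q) := by
      intro x hx y hy hxy
      by_contra hne
      exact hcon x y (Finset.mem_coe.mp hx) (Finset.mem_coe.mp hy) hne hxy
    have := Finset.card_image_iff.mpr hinj
    rw [show Finset.image (fun x => wordAct δ x (w.drop i)) (wordImage δ S (w.take i))
      = wordImage δ (wordImage δ S (w.take i)) (w.drop i) from rfl] at this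
    omega
  choose pf qf hpf hqf hne heq using hsuffix
  -- the cross condition
  have hcross : ∀ i j : Fin m, i < j →
      pf j ∉ wordImage δ S (w.take i) ∨ qf j ∉ wordImage δ S (w.take i) := by
    intro i j hij
    by_contra hcon
    push_neg at hcon
    obtain ⟨hpj, hqj⟩ := hcon
    have hlt : (wordImage δ S (w.take i ++ w.drop j)).card < S.card := by
      rw [wordImage_append]
      calc (wordImage δ (wordImage δ S (w.take i)) (w.drop j)).card
          < (wordImage δ S (w.take i)).card :=
            wordImage_card_lt δ _ _ hpj hqj (hne j) (heq j)
        _ = S.card := hpre i i.2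
    have hmem : (w.take i ++ w.drop j).length ∈ T := ⟨_, rfl, hlt⟩
    have hlen : (w.take i ++ w.drop j).length = i + (m - j) := by
      rw [List.length_append, List.length_take, List.length_drop, hwlen]
      have := i.2
      omega
    have := Nat.sInf_le hmem
    rw [hlen] at this
    have h1 : (i : ℕ) < j := hij
    have h2 : (j : ℕ) < m := j.2
    omega
  -- apply the Frankl bound with the complements of the prefix images
  have hmle : m ≤ (r + 1) * (r + 2) / 2 := by
    refine frankl_pairs m r pf qf (fun i => (wordImage δ S (w.take i))ᶜ) ?_ ?_ ?_ hne ?_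
    · intro i
      rw [Finset.card_compl, hpre i i.2]
      omega
    · intro i
      rw [Finset.mem_compl, not_not]
      exact hpf i
    · intro i
      rw [Finset.mem_compl, not_not]
      exact hqf i
    · intro i j hij
      rcases hcross i j hij with h | h
      · exact Or.inl (Finset.mem_compl.mpr h)
      · exact Or.inr (Finset.mem_compl.mpr h)
  exact ⟨w, hwlen ▸ hmle, hwcomp⟩

end PinFranklAux

/-- The Pin–Frankl theorem: if `u` has length `l` and corank `r ≤ n - 2`, then there is a word of
length at most `l + (r+1)(r+2)/2` and corank at least `r + 1`. -/
theorem pin_frankl_step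
    {Q A : Type*} [Fintype Q] [DecidableEq Q] (δ : Q → A → Q)
    (hsync : IsSynchronizing δ)
    (u : List A) (l r : ℕ) (hlen : u.length = l)
    (hcorank : wordRank δ u + r = Fintype.card Q)
    (hr : r + 2 ≤ Fintype.card Q) :
    ∃ w : List A, w.length ≤ l + (r + 1) * (r + 2) / 2 ∧
      wordRank δ w + (r + 1) ≤ Fintype.card Q := by
    classical
  have hScard : (wordImage δ Finset.univ u).card + r = Fintype.card Q := hcorank
  have h2 : 2 ≤ (wordImage δ Finset.univ u).card := by omega
  obtain ⟨w, hwlen, hwlt⟩ := compress_short δ hsync (wordImage δ Finset.univ u) r hScard h2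
  refine ⟨u ++ w, ?_, ?_⟩
  · rw [List.length_append, hlen]
    omega
  · have hrk : wordRank δ (u ++ w) = (wordImage δ (wordImage δ Finset.univ u) w).card := by
      rw [wordRank, wordImage_append]
    omega
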